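/- Let n = n₁ + n₂ and suppose B ∈ ℝ^{n₁×n₂} and C ∈ ℝ^{n₂×n₂} with n₂ < n₁/2. Then the matrix J = [[0, -B],[Bᵀ, -C]] ∈ ℝ^{n×n} is not Hurwitz stable; equivalently, there is no symmetric positive definite P with Jᵀ P + P J negative definite. -/

import Mathlib

open Matrix

-- auxiliary: a linear map from a bigger finite free module has nontrivial kernel
lemma exists_ne_zero_mulVec_eq_zero {n₁ n₂ : ℕ} (h : n₂ < n₁)
    (M : Matrix (Fin n₂) (Fin n₁) ℂ) : ∃ v : Fin n₁ → ℂ, v ≠ 0 ∧ M *ᵥ v = 0 := by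
  set f := M.mulVecLin
  have hrn := f.finrank_range_add_finrank_ker
  have hrange : Module.finrank ℂ (LinearMap.range f) ≤ n₂ := by
    have := Submodule.finrank_le (LinearMap.range f)
    simpa using this
  have hker : 0 < Module.finrank ℂ (LinearMap.ker f) := by
    have hdom : Module.finrank ℂ (Fin n₁ → ℂ) = n₁ := by simp
    omega
  have hne : LinearMap.ker f ≠ ⊥ := by
    intro hbot
    rw [hbot] at hker
    simp at hker
  obtain ⟨v, hv, hv0⟩ := Submodule.exists_mem_ne_zero_of_ne_bot hne
  exact ⟨v, hv0, hv⟩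

theorem stmt_13 (n₁ n₂ : ℕ) (hdim : 2 * n₂ < n₁)
    (B : Matrix (Fin n₁) (Fin n₂) ℝ) (C : Matrix (Fin n₂) (Fin n₂) ℝ)
    (J : Matrix (Fin n₁ ⊕ Fin n₂) (Fin n₁ ⊕ Fin n₂) ℝ)
    (hJ : J = Matrix.fromBlocks 0 (-B) Bᵀ (-C)) :
    (¬ ∀ lam ∈ spectrum ℂ (J.map (Complex.ofReal)), lam.re < 0) ∧
    (¬ ∃ P : Matrix (Fin n₁ ⊕ Fin n₂) (Fin n₁ ⊕ Fin n₂) ℝ,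
        P.PosDef ∧ (-(Jᵀ * P + P * J)).PosDef) := by
  constructor
  · -- 0 is an eigenvalue of J since J is singular
    intro hall
    set Jc := J.map (Complex.ofReal) with hJc
    have hn : n₂ < n₁ := by omega
    obtain ⟨v, hv0, hv⟩ := exists_ne_zero_mulVec_eq_zero hn ((Bᵀ).map Complex.ofReal)
    have hdet : Jc.det = 0 := by
      rw [← Matrix.exists_mulVec_eq_zero_iff]
      refine ⟨Sum.elim v 0, ?_, ?_⟩
      · intro h
        apply hv0
        funext i
        exact congrFun h (Sum.inl i)
      · funext i
        cases i with
        | inl i =>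
          simp [hJc, hJ, Matrix.mulVec, dotProduct, Fintype.sum_sum_type]
        | inr i =>
          have := congrFun hv i
          simpa [hJc, hJ, Matrix.mulVec, dotProduct,
            Fintype.sum_sum_type] using this
    have h0 : (0 : ℂ) ∈ spectrum ℂ Jc := by
      rw [spectrum.zero_mem_iff]
      rw [Matrix.isUnit_iff_isUnit_det, hdet]
      simp
    have := hall 0 h0
    simp at this
  · rintro ⟨P, hP, hQ⟩
    set Q : Matrix (Fin n₁ ⊕ Fin n₂) (Fin n₁ ⊕ Fin n₂) ℝ := -(Jᵀ * P + P * J) with hQdef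
    set Q₁₁ : Matrix (Fin n₁) (Fin n₁) ℝ := Q.submatrix Sum.inl Sum.inl with hQ11
    -- Q₁₁ is positive definite
    have hQ11pd : Q₁₁.PosDef := by
      refine Matrix.PosDef.of_dotProduct_mulVec_pos ?_ ?_
      · have h := hQ.1
        rw [Matrix.IsHermitian] at h ⊢
        rw [hQ11, Matrix.conjTranspose_submatrix, h]
      · intro x hx
        have hy : (Sum.elim x 0 : Fin n₁ ⊕ Fin n₂ → ℝ) ≠ 0 := by
          intro h
          apply hx
          funext i
          exact congrFun h (Sum.inl i)
        have hpos := hQ.dotProduct_mulVec_pos hy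
        have heq : dotProduct (star (Sum.elim x 0)) (Q *ᵥ Sum.elim x 0)
            = dotProduct (star x) (Q₁₁ *ᵥ x) := by
          simp [dotProduct, Matrix.mulVec, Fintype.sum_sum_type, hQ11]
        rw [heq] at hpos
        exact hpos
    -- Q₁₁ has rank at most 2 * n₂
    have hfact : Q₁₁ = Matrix.fromCols (-B) (P.submatrix Sum.inl Sum.inr) *
        Matrix.fromRows (P.submatrix Sum.inr Sum.inl) (-Bᵀ) := by
      rw [Matrix.fromCols_mul_fromRows]
      ext i j
      simp [hQ11, hQdef, hJ, Matrix.mul_apply, Fintype.sum_sum_type,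
        Finset.sum_add_distrib, Finset.sum_neg_distrib]
      ring
    have hranklow : Q₁₁.rank ≤ 2 * n₂ := by
      rw [hfact]
      calc (Matrix.fromCols (-B) (P.submatrix Sum.inl Sum.inr) *
          Matrix.fromRows (P.submatrix Sum.inr Sum.inl) (-Bᵀ)).rank
          ≤ (Matrix.fromRows (P.submatrix Sum.inr Sum.inl) (-Bᵀ)).rank :=
            Matrix.rank_mul_le_right _ _
        _ ≤ Fintype.card (Fin n₂ ⊕ Fin n₂) := Matrix.rank_le_card_height _
        _ = 2 * n₂ := by simp; ring
    -- but positive definite matrices are invertible, so rank = n₁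
    have hunit : IsUnit Q₁₁ := by
      rw [Matrix.isUnit_iff_isUnit_det]
      exact isUnit_iff_ne_zero.mpr (ne_of_gt hQ11pd.det_pos)
    have hrank : Q₁₁.rank = n₁ := by
      rw [Matrix.rank_of_isUnit _ hunit]
      simp
    omega
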